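/- Let H be a graph with v_H vertices and let t ≥ 2 be an integer. Then every n-vertex graph with no subgraph isomorphic to H and no induced copy of K_{2,t+1} has at most (√2 + o(1)) · t^{1/2} · (v_H + t)^{t/2} · n^{3/2} edges. -/
import Mathlib


open SimpleGraph Finset

/-- `H` occurs in `G` as a (not necessarily induced) subgraph. -/
def HasCopy {α β : Type*} (H : SimpleGraph α) (G : SimpleGraph β) : Prop :=
  ∃ f : α → β, Function.Injective f ∧ ∀ a b, H.Adj a b → G.Adj (f a) (f b)

/-- `H` occurs in `G` as an induced subgraph. -/
def HasInducedCopy {α β : Type*} (H : SimpleGraph α) (G : SimpleGraph β) : Prop :=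
  Nonempty (H ↪g G)


lemma clique_singleton {V : Type*} (G : SimpleGraph V) (v : V) :
    G.IsClique ({v} : Finset V) := by
  simp [Finset.coe_singleton, SimpleGraph.isClique_singleton]

lemma clique_insert_finset {V : Type*} [DecidableEq V] (G : SimpleGraph V) {T : Finset V} {v : V}
    (hT : G.IsClique (T : Set V)) (h : ∀ u ∈ T, v ≠ u → G.Adj v u) :
    G.IsClique ((insert v T : Finset V) : Set V) := by
  rw [Finset.coe_insert]
  exact hT.insert (fun u hu hne => h u hu hne)

lemma ramsey_aux {V : Type*} [DecidableEq V] (G : SimpleGraph V) [DecidableRel G.Adj] :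
    ∀ (M a b : ℕ), a + b = M → ∀ S : Finset V, (a + b).choose a ≤ S.card →
      (∃ T ⊆ S, T.card = a + 1 ∧ G.IsClique (T : Set V)) ∨
      (∃ T ⊆ S, T.card = b + 1 ∧ Gᶜ.IsClique (T : Set V)) := by
  intro M
  induction M using Nat.strong_induction_on with
  | _ M ih =>
    intro a b hab S hS
    have hpos : 0 < (a + b).choose a := Nat.choose_pos (Nat.le_add_right a b)
    have hSne : S.Nonempty := Finset.card_pos.mp (lt_of_lt_of_le hpos hS)
    obtain ⟨v, hv⟩ := hSne
    match a, b with
    | 0, b =>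
      exact Or.inl ⟨{v}, Finset.singleton_subset_iff.mpr hv, Finset.card_singleton v,
        clique_singleton G v⟩
    | a + 1, 0 =>
      exact Or.inr ⟨{v}, Finset.singleton_subset_iff.mpr hv, Finset.card_singleton v,
        clique_singleton Gᶜ v⟩
    | a + 1, b + 1 =>
      set A := (S.erase v).filter (fun u => G.Adj v u) with hA
      set B := (S.erase v).filter (fun u => ¬ G.Adj v u) with hB
      have hcards : A.card + B.card = S.card - 1 := by
        rw [Finset.card_filter_add_card_filter_not, Finset.card_erase_of_mem hv]
      have hchoose : (a + 1 + (b + 1)).choose (a + 1)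
          = (a + 1 + b).choose a + (a + 1 + b).choose (a + 1) := by
        have h1 : a + 1 + (b + 1) = (a + 1 + b) + 1 := by omega
        rw [h1, Nat.choose_succ_succ']
        
      have hAsub : A ⊆ S := (Finset.filter_subset _ _).trans (Finset.erase_subset _ _)
      have hBsub : B ⊆ S := (Finset.filter_subset _ _).trans (Finset.erase_subset _ _)
      have hvA : v ∉ A := fun h => (Finset.mem_erase.mp (Finset.filter_subset _ _ h)).1 rfl
      have hvB : v ∉ B := fun h => (Finset.mem_erase.mp (Finset.filter_subset _ _ h)).1 rfl
      by_cases hcase : (a + (b + 1)).choose a ≤ A.card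
      · rcases ih (a + (b + 1)) (by omega) a (b + 1) rfl A hcase with ⟨T, hTA, hTc, hTcl⟩ | ⟨T, hTA, hTc, hTcl⟩
        · refine Or.inl ⟨insert v T, ?_, ?_, ?_⟩
          · exact Finset.insert_subset hv (hTA.trans hAsub)
          · rw [Finset.card_insert_of_notMem (fun h => hvA (hTA h)), hTc]
          · refine clique_insert_finset G hTcl (fun u hu _ => ?_)
            exact (Finset.mem_filter.mp (hTA hu)).2
        · exact Or.inr ⟨T, hTA.trans hAsub, hTc, hTcl⟩
      · have hBc : (a + 1 + b).choose (a + 1) ≤ B.card := by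
          have h2 : (a + (b + 1)).choose a = (a + 1 + b).choose a := by
            congr 1; omega
          have := hS
          rw [hchoose] at this
          omega
        rcases ih (a + 1 + b) (by omega) (a + 1) b rfl B hBc with ⟨T, hTB, hTc, hTcl⟩ | ⟨T, hTB, hTc, hTcl⟩
        · exact Or.inl ⟨T, hTB.trans hBsub, hTc, hTcl⟩
        · refine Or.inr ⟨insert v T, ?_, ?_, ?_⟩
          · exact Finset.insert_subset hv (hTB.trans hBsub)
          · rw [Finset.card_insert_of_notMem (fun h => hvB (hTB h)), hTc]
          · refine clique_insert_finset Gᶜ hTcl (fun u hu hne => ?_)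
            exact ⟨hne, (Finset.mem_filter.mp (hTB hu)).2⟩

lemma induced_K2t {n t : ℕ} (G : SimpleGraph (Fin n)) [DecidableRel G.Adj]
    {u w : Fin n} (hne : u ≠ w) (hnadj : ¬ G.Adj u w) {T : Finset (Fin n)}
    (hTc : T.card = t + 1) (hTu : ∀ x ∈ T, G.Adj u x) (hTw : ∀ x ∈ T, G.Adj w x)
    (hTind : ∀ x ∈ T, ∀ y ∈ T, x ≠ y → ¬ G.Adj x y) :
    HasInducedCopy (completeBipartiteGraph (Fin 2) (Fin (t + 1))) G := by
  classical
  have e : {x // x ∈ T} ≃ Fin (t + 1) := Fintype.equivFinOfCardEq (by rw [Fintype.card_coe, hTc])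
  set g : Fin (t + 1) → Fin n := fun j => (e.symm j : Fin n) with hg
  have hgT : ∀ j, g j ∈ T := fun j => (e.symm j).2
  have hginj : Function.Injective g := fun j k hjk => by
    have := Subtype.coe_injective (hjk : ((e.symm j : {x // x ∈ T}) : Fin n) = e.symm k)
    exact e.symm.injective this
  have huT : u ∉ T := fun h => G.irrefl (hTu u h)
  have hwT : w ∉ T := fun h => G.irrefl (hTw w h)
  set f : Fin 2 ⊕ Fin (t + 1) → Fin n := Sum.elim (fun i => if i = 0 then u else w) g with hf
  have hfl : ∀ i : Fin 2, f (Sum.inl i) = u ∨ f (Sum.inl i) = w := by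
    intro i; by_cases h : i = 0 <;> simp [hf, h]
  have hfr : ∀ j, f (Sum.inr j) = g j := fun j => rfl
  have two_cases : ∀ i : Fin 2, i = 0 ∨ i = 1 := by decide
  have hflne : ∀ i i' : Fin 2, i ≠ i' → ((f (Sum.inl i) = u ∧ f (Sum.inl i') = w) ∨
      (f (Sum.inl i) = w ∧ f (Sum.inl i') = u)) := by
    intro i i' hii
    rcases two_cases i with rfl | rfl <;> rcases two_cases i' with rfl | rfl
    · exact absurd rfl hii
    · left; constructor <;> simp [hf]
    · right; constructor <;> simp [hf]
    · exact absurd rfl hii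
  have hinj : Function.Injective f := by
    rintro (i | j) (i' | j') hxy
    · by_contra hcon
      have hii : i ≠ i' := fun h => hcon (by rw [h])
      rcases hflne i i' hii with ⟨h1, h2⟩ | ⟨h1, h2⟩ <;> rw [h1, h2] at hxy
      · exact hne hxy
      · exact hne hxy.symm
    · exfalso
      rcases hfl i with h | h <;> rw [hfr j'] at hxy <;> rw [h] at hxy
      · exact huT (hxy ▸ hgT j')
      · exact hwT (hxy ▸ hgT j')
    · exfalso
      rcases hfl i' with h | h <;> rw [hfr j] at hxy <;> rw [h] at hxy
      · exact huT (hxy.symm ▸ hgT j)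
      · exact hwT (hxy.symm ▸ hgT j)
    · exact congrArg Sum.inr (hginj hxy)
  have hrel : ∀ x y, G.Adj (f x) (f y) ↔ (completeBipartiteGraph (Fin 2) (Fin (t + 1))).Adj x y := by
    rintro (i | j) (i' | j')
    · constructor
      · intro h
        exfalso
        by_cases hii : i = i'
        · exact G.irrefl (hii ▸ h)
        · rcases hflne i i' hii with ⟨h1, h2⟩ | ⟨h1, h2⟩ <;> rw [h1, h2] at h
          · exact hnadj h
          · exact hnadj h.symm
      · intro h; simp at h
    · constructor
      · intro _; simp
      · intro _
        rw [hfr j']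
        rcases hfl i with h | h <;> rw [h]
        · exact hTu _ (hgT j')
        · exact hTw _ (hgT j')
    · constructor
      · intro _; simp
      · intro _
        rw [hfr j]
        rcases hfl i' with h | h <;> rw [h]
        · exact (hTu _ (hgT j)).symm
        · exact (hTw _ (hgT j)).symm
    · constructor
      · intro h
        exfalso
        rw [hfr j, hfr j'] at h
        by_cases hjk : j = j'
        · exact G.irrefl (hjk ▸ h)
        · exact hTind _ (hgT j) _ (hgT j') (fun hh => hjk (hginj hh)) h
      · intro h; simp at h
  exact ⟨⟨⟨f, hinj⟩, hrel _ _⟩⟩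


lemma pervertex {n : ℕ} (G : SimpleGraph (Fin n)) [DecidableRel G.Adj] (s r' : ℕ)
    (hcf : G.CliqueFree (r' + 2))
    (hcodeg : ∀ u w : Fin n, u ≠ w → ¬ G.Adj u w →
      (G.neighborFinset u ∩ G.neighborFinset w).card ≤ s) (v : Fin n) :
    G.degree v ^ 2 ≤
      2 * ((G.neighborFinset v ×ˢ G.neighborFinset v).filter
            (fun p => p.1 ≠ p.2 ∧ ¬ G.Adj p.1 p.2)).card
        + (2 * r' + 2 + s) * G.degree v := by
  classical
  set D := G.neighborFinset v with hD
  set d := G.degree v with hd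
  have hdD : D.card = d := rfl
  -- split the square
  have h1 : ((D ×ˢ D).filter (fun p => p.1 = p.2)).card +
      ((D ×ˢ D).filter (fun p => ¬ p.1 = p.2)).card = d * d := by
    rw [Finset.card_filter_add_card_filter_not, Finset.card_product, hdD]
  have hdiag : ((D ×ˢ D).filter (fun p : Fin n × Fin n => p.1 = p.2)).card = d := by
    rw [show (D ×ˢ D).filter (fun p : Fin n × Fin n => p.1 = p.2)
        = D.image (fun u => (u, u)) from ?_]
    · rw [Finset.card_image_of_injective _ (fun a b h => (Prod.mk.injEq _ _ _ _ ▸ h).1), hdD]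
    · ext ⟨x, y⟩
      simp only [Finset.mem_filter, Finset.mem_product, Finset.mem_image, Prod.mk.injEq]
      constructor
      · rintro ⟨⟨hx, _⟩, rfl⟩; exact ⟨x, hx, rfl, rfl⟩
      · rintro ⟨a, ha, rfl, rfl⟩; exact ⟨⟨ha, ha⟩, rfl⟩
  have h2 : (((D ×ˢ D).filter (fun p => ¬ p.1 = p.2)).filter (fun p => G.Adj p.1 p.2)).card +
      (((D ×ˢ D).filter (fun p => ¬ p.1 = p.2)).filter (fun p => ¬ G.Adj p.1 p.2)).card =
      ((D ×ˢ D).filter (fun p => ¬ p.1 = p.2)).card :=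
    Finset.card_filter_add_card_filter_not _
  have hadjeq : ((D ×ˢ D).filter (fun p => ¬ p.1 = p.2)).filter (fun p => G.Adj p.1 p.2)
      = (D ×ˢ D).filter (fun p => G.Adj p.1 p.2) := by
    rw [Finset.filter_filter]
    apply Finset.filter_congr
    intro p _
    simp only [and_iff_right_iff_imp]
    exact fun h => (G.ne_of_adj h)
  have hYeq : ((D ×ˢ D).filter (fun p => ¬ p.1 = p.2)).filter (fun p => ¬ G.Adj p.1 p.2)
      = (D ×ˢ D).filter (fun p => p.1 ≠ p.2 ∧ ¬ G.Adj p.1 p.2) := by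
    rw [Finset.filter_filter]
  set Y := ((D ×ˢ D).filter (fun p => p.1 ≠ p.2 ∧ ¬ G.Adj p.1 p.2)).card with hY
  set madj := ((D ×ˢ D).filter (fun p : Fin n × Fin n => G.Adj p.1 p.2)).card with hmadj
  have hsplit : d * d = d + madj + Y := by
    rw [← h1, hdiag, ← h2, hadjeq, hYeq, ← hmadj, ← hY, Nat.add_assoc]
  -- madj as a sum
  have hmadjsum : madj = ∑ u ∈ D, (G.neighborFinset u ∩ D).card := by
    rw [hmadj, Finset.card_filter, Finset.sum_product]
    apply Finset.sum_congr rfl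
    intro u _
    rw [← Finset.card_filter]
    congr 1
    ext x
    simp only [Finset.mem_filter, Finset.mem_inter, mem_neighborFinset]
    tauto
  -- the set of high-degree-in-D vertices is a clique together with v
  set A := D.filter (fun u => d + s + 1 ≤ 2 * (G.neighborFinset u ∩ D).card) with hA
  have hvD : v ∉ D := by simp [hD]
  have hAcl : G.IsClique (insert v (A : Set (Fin n))) := by
    have hAclique : G.IsClique (A : Set (Fin n)) := by
      intro x hx y hy hxy
      by_contra hnadj
      have hxA := Finset.mem_filter.mp hx
      have hyA := Finset.mem_filter.mp hy
      have hsub : (G.neighborFinset x ∩ D) ∩ (G.neighborFinset y ∩ D) ⊆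
          G.neighborFinset x ∩ G.neighborFinset y := by
        intro z hz
        simp only [Finset.mem_inter] at hz ⊢
        exact ⟨hz.1.1, hz.2.1⟩
      have hcup : ((G.neighborFinset x ∩ D) ∪ (G.neighborFinset y ∩ D)).card ≤ d := by
        rw [← hdD]
        exact Finset.card_le_card (Finset.union_subset Finset.inter_subset_right
          Finset.inter_subset_right)
      have hiu := Finset.card_inter_add_card_union (G.neighborFinset x ∩ D)
        (G.neighborFinset y ∩ D)
      have hle := Finset.card_le_card hsub
      have hcod := hcodeg x y hxy hnadj
      omega
    intro x hx y hy hxy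
    rw [Set.mem_insert_iff] at hx hy
    rcases hx with rfl | hx
    · rcases hy with rfl | hy
      · exact absurd rfl hxy
      · exact (G.mem_neighborFinset x y).mp (Finset.mem_filter.mp (Finset.mem_coe.mp hy)).1
    · rcases hy with rfl | hy
      · exact ((G.mem_neighborFinset y x).mp (Finset.mem_filter.mp (Finset.mem_coe.mp hx)).1).symm
      · exact hAclique hx hy hxy
  have hAcard : A.card ≤ r' := by
    by_contra hcon
    push_neg at hcon
    have hins : (insert v A).card = A.card + 1 :=
      Finset.card_insert_of_notMem (fun h => hvD (Finset.filter_subset _ _ h))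
    have hge : r' + 2 ≤ (insert v A).card := by omega
    obtain ⟨B, hBsub, hBcard⟩ := Finset.exists_subset_card_eq hge
    refine hcf B ⟨?_, hBcard⟩
    have : (B : Set (Fin n)) ⊆ (insert v A : Finset (Fin n)) := fun x hx => hBsub hx
    refine hAcl.subset (this.trans ?_)
    rw [Finset.coe_insert]
  -- bound madj
  have hbound : 2 * madj ≤ 2 * (r' * d) + d * (d + s) := by
    have hsplitsum : ∑ u ∈ D, (G.neighborFinset u ∩ D).card
        = (∑ u ∈ A, (G.neighborFinset u ∩ D).card)
          + ∑ u ∈ D.filter (fun u => ¬ d + s + 1 ≤ 2 * (G.neighborFinset u ∩ D).card),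
              (G.neighborFinset u ∩ D).card := by
      rw [hA, Finset.sum_filter_add_sum_filter_not]
    have hAsum : ∑ u ∈ A, (G.neighborFinset u ∩ D).card ≤ r' * d := by
      calc ∑ u ∈ A, (G.neighborFinset u ∩ D).card ≤ ∑ u ∈ A, d := by
            apply Finset.sum_le_sum
            intro u _
            rw [← hdD]
            exact Finset.card_le_card Finset.inter_subset_right
        _ = A.card * d := by rw [Finset.sum_const, smul_eq_mul]
        _ ≤ r' * d := Nat.mul_le_mul_right d hAcard
    have hBsum : 2 * ∑ u ∈ D.filter (fun u => ¬ d + s + 1 ≤ 2 * (G.neighborFinset u ∩ D).card),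
        (G.neighborFinset u ∩ D).card ≤ d * (d + s) := by
      rw [Finset.mul_sum]
      calc ∑ u ∈ D.filter (fun u => ¬ d + s + 1 ≤ 2 * (G.neighborFinset u ∩ D).card),
            2 * (G.neighborFinset u ∩ D).card
          ≤ ∑ _u ∈ D.filter (fun u => ¬ d + s + 1 ≤ 2 * (G.neighborFinset u ∩ D).card), (d + s) := by
            apply Finset.sum_le_sum
            intro u hu
            have := (Finset.mem_filter.mp hu).2
            omega
        _ = (D.filter (fun u => ¬ d + s + 1 ≤ 2 * (G.neighborFinset u ∩ D).card)).card * (d + s) := by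
            rw [Finset.sum_const, smul_eq_mul]
        _ ≤ d * (d + s) := by
            apply Nat.mul_le_mul_right
            rw [← hdD]
            exact Finset.card_le_card (Finset.filter_subset _ _)
    omega
  -- combine
  nlinarith [hsplit, hbound, sq_nonneg d]

lemma count_main {n : ℕ} (G : SimpleGraph (Fin n)) [DecidableRel G.Adj] (s r' : ℕ)
    (hcf : G.CliqueFree (r' + 2))
    (hcodeg : ∀ u w : Fin n, u ≠ w → ¬ G.Adj u w →
      (G.neighborFinset u ∩ G.neighborFinset w).card ≤ s) :
    4 * G.edgeFinset.card ^ 2 ≤ (3 * s + 2 * r' + 2) * n ^ 3 := by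
  classical
  set N := fun v => G.neighborFinset v with hN
  set P := (univ : Finset (Fin n × Fin n)).filter (fun p => p.1 ≠ p.2 ∧ ¬ G.Adj p.1 p.2) with hP
  set X := ∑ p ∈ P, (N p.1 ∩ N p.2).card with hX
  -- upper bound for X
  have hXub : X ≤ s * n ^ 2 := by
    calc X ≤ ∑ _p ∈ P, s := Finset.sum_le_sum (fun p hp => by
            have := Finset.mem_filter.mp hp
            exact hcodeg p.1 p.2 this.2.1 this.2.2)
      _ = P.card * s := by rw [Finset.sum_const, smul_eq_mul]
      _ ≤ n ^ 2 * s := by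
          apply Nat.mul_le_mul_right
          calc P.card ≤ (univ : Finset (Fin n × Fin n)).card := Finset.card_le_card (Finset.filter_subset _ _)
            _ = n ^ 2 := by simp [Finset.card_univ, sq]
      _ = s * n ^ 2 := Nat.mul_comm _ _
  -- double counting
  have hXY : X = ∑ v : Fin n, ((N v ×ˢ N v).filter (fun p => p.1 ≠ p.2 ∧ ¬ G.Adj p.1 p.2)).card := by
    have hpt : ∀ a b : Fin n, (N a ∩ N b).card
        = ∑ v : Fin n, (if a ∈ N v ∧ b ∈ N v then 1 else 0) := by
      intro a b
      have : N a ∩ N b = univ.filter (fun v => a ∈ N v ∧ b ∈ N v) := by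
        ext x
        simp only [Finset.mem_inter, hN, mem_neighborFinset, Finset.mem_filter,
          Finset.mem_univ, true_and]
        rw [G.adj_comm a x, G.adj_comm b x]
      rw [this, Finset.card_filter]
    rw [hX]
    simp_rw [hpt]
    rw [Finset.sum_comm]
    apply Finset.sum_congr rfl
    intro v _
    rw [← Finset.sum_filter_add_sum_filter_not P (fun p => p.1 ∈ N v ∧ p.2 ∈ N v)]
    have hz : ∑ p ∈ P.filter (fun p => ¬ (p.1 ∈ N v ∧ p.2 ∈ N v)),
        (if p.1 ∈ N v ∧ p.2 ∈ N v then 1 else 0) = 0 := by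
      apply Finset.sum_eq_zero
      intro p hp
      rw [if_neg (Finset.mem_filter.mp hp).2]
    have ho : ∑ p ∈ P.filter (fun p => p.1 ∈ N v ∧ p.2 ∈ N v),
        (if p.1 ∈ N v ∧ p.2 ∈ N v then 1 else 0)
        = (P.filter (fun p => p.1 ∈ N v ∧ p.2 ∈ N v)).card := by
      rw [Finset.card_eq_sum_ones]
      apply Finset.sum_congr rfl
      intro p hp
      rw [if_pos (Finset.mem_filter.mp hp).2]
    rw [hz, ho, Nat.add_zero]
    congr 1
    ext ⟨a, b⟩
    simp only [hP, Finset.mem_filter, Finset.mem_univ, true_and, Finset.mem_product]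
    tauto
  -- combine with pervertex
  have hsum : ∑ v : Fin n, G.degree v ^ 2 ≤ 2 * X + (2 * r' + 2 + s) * (2 * G.edgeFinset.card) := by
    calc ∑ v : Fin n, G.degree v ^ 2
        ≤ ∑ v : Fin n, (2 * ((N v ×ˢ N v).filter (fun p => p.1 ≠ p.2 ∧ ¬ G.Adj p.1 p.2)).card
            + (2 * r' + 2 + s) * G.degree v) :=
          Finset.sum_le_sum (fun v _ => pervertex G s r' hcf hcodeg v)
      _ = 2 * X + (2 * r' + 2 + s) * (2 * G.edgeFinset.card) := by
          rw [Finset.sum_add_distrib, ← Finset.mul_sum, ← Finset.mul_sum, ← hXY,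
            G.sum_degrees_eq_twice_card_edges]
  -- Cauchy-Schwarz
  have hCS : (∑ v : Fin n, G.degree v) ^ 2 ≤ n * ∑ v : Fin n, G.degree v ^ 2 := by
    have h := sq_sum_le_card_mul_sum_sq (s := (univ : Finset (Fin n)))
      (f := fun v => (G.degree v : ℤ))
    have hc : ((univ : Finset (Fin n)).card : ℤ) = (n : ℤ) := by simp
    exact_mod_cast hc ▸ h
  -- degree bound
  have hdeg : 2 * G.edgeFinset.card ≤ n * n := by
    rw [← G.sum_degrees_eq_twice_card_edges]
    calc ∑ v : Fin n, G.degree v ≤ ∑ _v : Fin n, n :=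
          Finset.sum_le_sum (fun v _ => by
            rw [← G.card_neighborFinset_eq_degree]
            calc (G.neighborFinset v).card ≤ (univ : Finset (Fin n)).card :=
                  Finset.card_le_card (Finset.subset_univ _)
              _ = n := by simp)
      _ = n * n := by rw [Finset.sum_const, smul_eq_mul, Finset.card_univ, Fintype.card_fin]
  -- assemble
  have e := G.edgeFinset.card
  have h4 : 4 * G.edgeFinset.card ^ 2 = (∑ v : Fin n, G.degree v) ^ 2 := by
    rw [G.sum_degrees_eq_twice_card_edges]; ring
  calc 4 * G.edgeFinset.card ^ 2 = (∑ v : Fin n, G.degree v) ^ 2 := h4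
    _ ≤ n * ∑ v : Fin n, G.degree v ^ 2 := hCS
    _ ≤ n * (2 * X + (2 * r' + 2 + s) * (2 * G.edgeFinset.card)) := Nat.mul_le_mul_left n hsum
    _ ≤ n * (2 * (s * n ^ 2) + (2 * r' + 2 + s) * (n * n)) := by
        apply Nat.mul_le_mul_left
        exact Nat.add_le_add (Nat.mul_le_mul_left 2 hXub) (Nat.mul_le_mul_left _ hdeg)
    _ ≤ (3 * s + 2 * r' + 2) * n ^ 3 := by ring_nf; nlinarith [sq_nonneg n]

/-- **Corollary.** For `t ≥ 2` and a fixed graph `H` on `v_H` vertices, every `n`-vertex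
`H`-free graph with no induced `K_{2,t+1}` has at most
`(√2 + o(1))·t^{1/2}·(v_H + t)^{t/2}·n^{3/2}` edges. -/
theorem stmt5 {W : Type*} [Fintype W] (H : SimpleGraph W) (t : ℕ) (ht : 2 ≤ t) :
    ∀ ε > (0 : ℝ), ∃ N : ℕ, ∀ n ≥ N, ∀ (G : SimpleGraph (Fin n)) [DecidableRel G.Adj],
      ¬ HasCopy H G →
      ¬ HasInducedCopy (completeBipartiteGraph (Fin 2) (Fin (t + 1))) G →
      (G.edgeFinset.card : ℝ) ≤
        (Real.sqrt 2 + ε) * (t : ℝ) ^ ((1 : ℝ) / 2) *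
          ((Fintype.card W + t : ℝ)) ^ ((t : ℝ) / 2) * (n : ℝ) ^ ((3 : ℝ) / 2) := by
  intro ε hε
  refine ⟨0, fun n _ G _ hH hind => ?_⟩
  classical
  -- G has no clique of size |W|
  have hcf : G.CliqueFree (Fintype.card W) := by
    intro S hS
    apply hH
    obtain ⟨hcl, hcard⟩ := hS
    have e1 : W ≃ {x // x ∈ S} := Fintype.equivOfCardEq (by rw [Fintype.card_coe, hcard])
    refine ⟨fun a => (e1 a : Fin n), fun a b hab => e1.injective (Subtype.coe_injective hab),
      fun a b hab => ?_⟩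
    exact hcl (e1 a).2 (e1 b).2
      (fun h => H.ne_of_adj hab (e1.injective (Subtype.coe_injective h)))
  -- trivial case n = 0
  rcases Nat.eq_zero_or_pos n with rfl | hn
  · have he : G.edgeFinset.card = 0 := by
      have h := G.sum_degrees_eq_twice_card_edges
      simp only [Finset.univ_eq_empty, Finset.sum_empty] at h
      omega
    rw [he]
    have : ((0 : ℕ) : ℝ) ^ ((3 : ℝ) / 2) = 0 := by
      rw [Nat.cast_zero, Real.zero_rpow (by norm_num)]
    rw [this, mul_zero]
    norm_num
  -- cases on |W|
  by_cases h0 : Fintype.card W = 0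
  · have hem : IsEmpty W := Fintype.card_eq_zero_iff.mp h0
    exact absurd ⟨fun a => hem.elim a, fun a b _ => hem.elim a, fun a b _ => hem.elim a⟩ hH
  by_cases h1 : Fintype.card W = 1
  · have hsub : Subsingleton W := Fintype.card_le_one_iff_subsingleton.mp (by omega)
    refine absurd ⟨fun _ => ⟨0, hn⟩, fun a b _ => Subsingleton.elim a b, fun a b hab => ?_⟩ hH
    exact absurd (Subsingleton.elim a b ▸ hab) (H.irrefl)
  obtain ⟨r', hr'⟩ : ∃ r', Fintype.card W = r' + 2 := ⟨Fintype.card W - 2, by omega⟩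
  rw [hr'] at hcf
  set s := (r' + 1 + t).choose (r' + 1) with hs
  -- codegree bound for nonadjacent pairs
  have hcodeg : ∀ u w : Fin n, u ≠ w → ¬ G.Adj u w →
      (G.neighborFinset u ∩ G.neighborFinset w).card ≤ s := by
    intro u w hne hnadj
    by_contra hcon
    push_neg at hcon
    rcases ramsey_aux G (r' + 1 + t) (r' + 1) t rfl
        (G.neighborFinset u ∩ G.neighborFinset w) hcon.le with
      ⟨T, hTsub, hTc, hTcl⟩ | ⟨T, hTsub, hTc, hTcl⟩
    · exact hcf T ⟨hTcl, hTc⟩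
    · refine hind (induced_K2t G hne hnadj hTc ?_ ?_ ?_)
      · intro x hx
        exact (G.mem_neighborFinset u x).mp (Finset.mem_inter.mp (hTsub hx)).1
      · intro x hx
        exact (G.mem_neighborFinset w x).mp (Finset.mem_inter.mp (hTsub hx)).2
      · intro x hx y hy hxy
        exact ((G.compl_adj x y).mp (hTcl (Finset.mem_coe.mpr hx) (Finset.mem_coe.mpr hy) hxy)).2
  -- counting
  have hcount := count_main G s r' hcf hcodeg
  have hsle : s ≤ (r' + 2 + t) ^ t := by
    calc s = (r' + 1 + t).choose t := by rw [hs, Nat.choose_symm_add]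
      _ ≤ (r' + 1 + t) ^ t := Nat.choose_le_pow _ _
      _ ≤ (r' + 2 + t) ^ t := Nat.pow_le_pow_left (by omega) t
  have hkey : G.edgeFinset.card ^ 2 ≤ 2 * t * (r' + 2 + t) ^ t * n ^ 3 := by
    have h8 : 3 * s + 2 * r' + 2 ≤ 8 * t * (r' + 2 + t) ^ t := by
      have hrle : r' + 2 + t ≤ (r' + 2 + t) ^ t := Nat.le_self_pow (by omega) _
      have htt : 16 ≤ 8 * t := by omega
      nlinarith [hsle, hrle]
    have h2 := hcount.trans (Nat.mul_le_mul_right (n ^ 3) h8)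
    have h3 : 8 * t * (r' + 2 + t) ^ t * n ^ 3 = 4 * (2 * t * (r' + 2 + t) ^ t * n ^ 3) := by ring
    rw [h3] at h2
    exact Nat.le_of_mul_le_mul_left h2 (by norm_num)
  -- pass to the reals
  have hkeyR : (G.edgeFinset.card : ℝ) ^ 2
      ≤ 2 * (t : ℝ) * ((r' : ℝ) + 2 + t) ^ t * (n : ℝ) ^ 3 := by
    exact_mod_cast hkey
  have hle : (G.edgeFinset.card : ℝ)
      ≤ Real.sqrt (2 * (t : ℝ) * ((r' : ℝ) + 2 + t) ^ t * (n : ℝ) ^ 3) :=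
    (Real.le_sqrt (by positivity) (by positivity)).mpr hkeyR
  have hsqrt : Real.sqrt (2 * (t : ℝ) * ((r' : ℝ) + 2 + t) ^ t * (n : ℝ) ^ 3)
      = Real.sqrt 2 * (t : ℝ) ^ ((1 : ℝ) / 2) * ((r' : ℝ) + 2 + t) ^ ((t : ℝ) / 2)
        * (n : ℝ) ^ ((3 : ℝ) / 2) := by
    rw [Real.sqrt_mul (by positivity), Real.sqrt_mul (by positivity),
      Real.sqrt_mul (by positivity)]
    congr 1
    · congr 1
      · congr 1
        exact (Real.sqrt_eq_rpow _)
      · rw [← Real.rpow_natCast ((r' : ℝ) + 2 + t) t, Real.sqrt_eq_rpow,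
          ← Real.rpow_mul (by positivity)]
        congr 1
        ring
    · rw [← Real.rpow_natCast (n : ℝ) 3, Real.sqrt_eq_rpow, ← Real.rpow_mul (by positivity)]
      norm_num
  have hcast : ((Fintype.card W + t : ℝ)) = ((r' : ℝ) + 2 + t) := by
    rw [hr']; push_cast; ring
  rw [hcast]
  calc (G.edgeFinset.card : ℝ)
      ≤ Real.sqrt 2 * (t : ℝ) ^ ((1 : ℝ) / 2) * ((r' : ℝ) + 2 + t) ^ ((t : ℝ) / 2)
        * (n : ℝ) ^ ((3 : ℝ) / 2) := by rw [← hsqrt]; exact hle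
    _ ≤ (Real.sqrt 2 + ε) * (t : ℝ) ^ ((1 : ℝ) / 2) * ((r' : ℝ) + 2 + t) ^ ((t : ℝ) / 2)
        * (n : ℝ) ^ ((3 : ℝ) / 2) := by
        have hsq : Real.sqrt 2 ≤ Real.sqrt 2 + ε := by linarith
        exact mul_le_mul_of_nonneg_right (mul_le_mul_of_nonneg_right
          (mul_le_mul_of_nonneg_right hsq (by positivity)) (by positivity)) (by positivity)
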